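/- Let x ∈ Δ_d↓ and ε > 0, and let B be any nonempty subset of the ball B^∞_ε(x) = {x' ∈ Δ_d↓ : ‖x' − x‖_∞ ≤ ε}. Then the majorization supremum x^sup of B (defined via the upper envelope of the pointwise suprema of partial sums) satisfies ‖x^sup − x‖_∞ ≤ ε; i.e., the supremum of any subset of the ℓ^∞-ball remains in the ball. -/

import Mathlib

open Finset

/-- Partial sum of the first `k` components of `x`. -/
def psum (d : ℕ) (x : Fin d → ℝ) (k : ℕ) : ℝ :=
  ∑ i ∈ Finset.univ.filter (fun i : Fin d => (i : ℕ) < k), x i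

/-- The ordered probability simplex `Δ_d↓`. -/
def Simplex (d : ℕ) (x : Fin d → ℝ) : Prop :=
  (∀ i j : Fin d, i ≤ j → x j ≤ x i) ∧ (∀ i, 0 ≤ x i) ∧ ∑ i, x i = 1

/-- Majorization: all partial sums of `x` dominate those of `y`. -/
def Maj (d : ℕ) (x y : Fin d → ℝ) : Prop :=
  ∀ k : ℕ, psum d y k ≤ psum d x k

/-- ℓ∞ distance. -/
noncomputable def dInf (d : ℕ) (x y : Fin d → ℝ) : ℝ := ⨆ i, |x i - y i|

/-- ℓ¹ distance. -/
def dOne (d : ℕ) (x y : Fin d → ℝ) : ℝ := ∑ i, |x i - y i|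
lemma psum_zero (d : ℕ) (y : Fin d → ℝ) : psum d y 0 = 0 := by
  simp [psum]

lemma psum_succ (d : ℕ) (y : Fin d → ℝ) (k : ℕ) :
    psum d y (k + 1) = psum d y k + (if h : k < d then y ⟨k, h⟩ else 0) := by
  unfold psum
  by_cases h : k < d
  · rw [dif_pos h]
    have hset : Finset.univ.filter (fun i : Fin d => (i : ℕ) < k + 1)
        = insert (⟨k, h⟩ : Fin d) (Finset.univ.filter (fun i : Fin d => (i : ℕ) < k)) := by
      ext i
      simp only [Finset.mem_filter, Finset.mem_insert, Finset.mem_univ, true_and]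
      constructor
      · intro hi
        rcases Nat.lt_succ_iff_lt_or_eq.mp hi with h1 | h1
        · exact Or.inr h1
        · exact Or.inl (Fin.ext h1)
      · rintro (rfl | hi)
        · exact Nat.lt_succ_self k
        · exact Nat.lt_succ_of_lt hi
    rw [hset, Finset.sum_insert (by simp)]
    ring
  · rw [dif_neg h]
    push_neg at h
    have hset : Finset.univ.filter (fun i : Fin d => (i : ℕ) < k + 1)
        = Finset.univ.filter (fun i : Fin d => (i : ℕ) < k) := by
      ext i
      simp only [Finset.mem_filter, Finset.mem_univ, true_and]
      have : (i : ℕ) < k := lt_of_lt_of_le i.isLt h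
      simp [this, Nat.lt_succ_of_lt this]
    rw [hset]; ring

lemma psum_of_le (d : ℕ) (y : Fin d → ℝ) (k : ℕ) (h : d ≤ k) :
    psum d y k = ∑ i, y i := by
  unfold psum
  congr 1
  ext i
  simp [lt_of_lt_of_le i.isLt h]
section psum2
variable {d : ℕ}

lemma psum_nonneg (y : Fin d → ℝ) (hy : ∀ i, 0 ≤ y i) (k : ℕ) : 0 ≤ psum d y k :=
  Finset.sum_nonneg fun i _ => hy i

lemma psum_le_total (y : Fin d → ℝ) (hy : ∀ i, 0 ≤ y i) (k : ℕ) :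
    psum d y k ≤ ∑ i, y i :=
  Finset.sum_le_sum_of_subset_of_nonneg (Finset.filter_subset _ _) fun i _ _ => hy i

lemma psum_le_nat (y : Fin d → ℝ) (hy : ∀ i, y i ≤ 1) (k : ℕ) :
    psum d y k ≤ (k : ℝ) := by
  induction k with
  | zero => simp [psum_zero]
  | succ k ih =>
    rw [psum_succ]
    by_cases h : k < d
    · rw [dif_pos h]; push_cast; have := hy ⟨k, h⟩; linarith
    · rw [dif_neg h]; push_cast; linarith

lemma psum_mono_k (y : Fin d → ℝ) (hy : ∀ i, 0 ≤ y i) {a b : ℕ} (hab : a ≤ b) :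
    psum d y a ≤ psum d y b := by
  induction b with
  | zero =>
    have : a = 0 := by omega
    subst this; exact le_rfl
  | succ b ih =>
    rcases Nat.lt_succ_iff_lt_or_eq.mp (Nat.lt_succ_of_le hab) with h | rfl
    · have := ih (by omega)
      rw [psum_succ]
      by_cases hbd : b < d
      · rw [dif_pos hbd]; have := hy ⟨b, hbd⟩; linarith
      · rw [dif_neg hbd]; linarith
    · rfl

lemma simplex_entry_le_one (b : Fin d → ℝ) (hb : Simplex d b) (i : Fin d) : b i ≤ 1 := by
  have h := Finset.single_le_sum (f := b) (fun j _ => hb.2.1 j) (Finset.mem_univ i)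
  rw [hb.2.2] at h
  exact h

lemma psum_interval_le (y : Fin d → ℝ) (hdec : ∀ i j : Fin d, i ≤ j → y j ≤ y i)
    (k : ℕ) (hkd : k < d) :
    ∀ m, k ≤ m → m ≤ d → psum d y m - psum d y k ≤ ((m - k : ℕ) : ℝ) * y ⟨k, hkd⟩ := by
  intro m hm
  induction m, hm using Nat.le_induction with
  | base => intro _; simp
  | succ m hm ih =>
    intro hmd
    have hmd' : m < d := by omega
    have h1 := ih (by omega)
    rw [psum_succ, dif_pos hmd']
    have h2 : y ⟨m, hmd'⟩ ≤ y ⟨k, hkd⟩ := hdec ⟨k, hkd⟩ ⟨m, hmd'⟩ (by simp [Fin.le_def]; omega)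
    have e : m + 1 - k = (m - k) + 1 := by omega
    rw [e]; push_cast; nlinarith [h1, h2]

lemma psum_interval_ge (y : Fin d → ℝ) (hdec : ∀ i j : Fin d, i ≤ j → y j ≤ y i)
    (k : ℕ) (hkd : k < d) (t : ℕ) (ht : t ≤ k) :
    ∀ m, t ≤ m → m ≤ k + 1 → ((m - t : ℕ) : ℝ) * y ⟨k, hkd⟩ ≤ psum d y m - psum d y t := by
  intro m hm
  induction m, hm using Nat.le_induction with
  | base => intro _; simp
  | succ m hm ih =>
    intro hmk
    have hmd' : m < d := by omega
    have h1 := ih (by omega)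
    rw [psum_succ, dif_pos hmd']
    have h2 : y ⟨k, hkd⟩ ≤ y ⟨m, hmd'⟩ := hdec ⟨m, hmd'⟩ ⟨k, hkd⟩ (by simp [Fin.le_def]; omega)
    have e : m + 1 - t = (m - t) + 1 := by omega
    rw [e]; push_cast; nlinarith [h1, h2]

end psum2
def AdmSet (d : ℕ) (F : ℕ → ℝ) : Set (ℕ → ℝ) :=
  {g | (∀ k, k ≤ d → F k ≤ g k) ∧ ∀ m, m + 2 ≤ d → g m + g (m + 2) ≤ 2 * g (m + 1)}

noncomputable def env (d : ℕ) (F : ℕ → ℝ) : ℕ → ℝ :=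
  fun k => sInf ((fun g => g k) '' AdmSet d F)

section envthy

variable {d : ℕ} {F : ℕ → ℝ}

lemma g0_mem (hF1 : ∀ k, k ≤ d → F k ≤ min (k : ℝ) 1) :
    (fun j : ℕ => min (j : ℝ) 1) ∈ AdmSet d F := by
  constructor
  · intro k hk; exact hF1 k hk
  · intro m _
    match m with
    | 0 => norm_num
    | (n+1) =>
      have h1 : min ((n+1 : ℕ) : ℝ) 1 = 1 := by
        rw [min_eq_right]; push_cast; linarith [Nat.cast_nonneg (α := ℝ) n]
      have h2 : min ((n+1+2 : ℕ) : ℝ) 1 = 1 := by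
        rw [min_eq_right]; push_cast; linarith [Nat.cast_nonneg (α := ℝ) n]
      have h3 : min ((n+1+1 : ℕ) : ℝ) 1 = 1 := by
        rw [min_eq_right]; push_cast; linarith [Nat.cast_nonneg (α := ℝ) n]
      show min ((n+1:ℕ):ℝ) 1 + min ((n+1+2:ℕ):ℝ) 1 ≤ 2 * min ((n+1+1:ℕ):ℝ) 1
      rw [h1, h2, h3]; norm_num

lemma envset_nonempty (hF1 : ∀ k, k ≤ d → F k ≤ min (k : ℝ) 1) (k : ℕ) :
    ((fun g => g k) '' AdmSet d F).Nonempty :=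
  ⟨_, Set.mem_image_of_mem _ (g0_mem hF1)⟩

lemma envset_bddBelow (k : ℕ) (hk : k ≤ d) :
    BddBelow ((fun g => g k) '' AdmSet d F) := by
  refine ⟨F k, ?_⟩
  rintro y ⟨g, hg, rfl⟩
  exact hg.1 k hk

lemma le_env (hF1 : ∀ k, k ≤ d → F k ≤ min (k : ℝ) 1) (k : ℕ) (hk : k ≤ d) :
    F k ≤ env d F k := by
  apply le_csInf (envset_nonempty hF1 k)
  rintro y ⟨g, hg, rfl⟩
  exact hg.1 k hk

lemma env_le (k : ℕ) (hk : k ≤ d) {g : ℕ → ℝ} (hg : g ∈ AdmSet d F) :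
    env d F k ≤ g k :=
  csInf_le (envset_bddBelow k hk) (Set.mem_image_of_mem _ hg)

lemma env_concave (hF1 : ∀ k, k ≤ d → F k ≤ min (k : ℝ) 1) (m : ℕ) (hm : m + 2 ≤ d) :
    env d F m + env d F (m + 2) ≤ 2 * env d F (m + 1) := by
  have h : (env d F m + env d F (m + 2)) / 2 ≤ env d F (m + 1) := by
    apply le_csInf (envset_nonempty hF1 (m+1))
    rintro y ⟨g, hg, rfl⟩
    have h1 := env_le m (by omega) hg
    have h2 := env_le (m+2) hm hg
    have h3 := hg.2 m hm
    simp only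
    linarith
  linarith

lemma env_mem_adm (hF1 : ∀ k, k ≤ d → F k ≤ min (k : ℝ) 1) :
    env d F ∈ AdmSet d F :=
  ⟨fun k hk => le_env hF1 k hk, fun m hm => env_concave hF1 m hm⟩

lemma env_zero (hF1 : ∀ k, k ≤ d → F k ≤ min (k : ℝ) 1) : env d F 0 = F 0 := by
  refine le_antisymm ?_ (le_env hF1 0 (Nat.zero_le d))
  have hg : (fun k => if k = 0 then F 0 else env d F k) ∈ AdmSet d F := by
    constructor
    · intro k hk
      by_cases h : k = 0
      · subst h; simp
      · simp only [if_neg h]; exact le_env hF1 k hk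
    · intro m hm
      by_cases h : m = 0
      · subst h
        simp only [eq_self_iff_true, if_true, if_neg (by omega : (2:ℕ) ≠ 0), if_neg (by omega : (1:ℕ) ≠ 0)]
        have := env_concave hF1 0 hm
        have h0 := le_env hF1 0 (Nat.zero_le d)
        linarith
      · simp only [if_neg h, if_neg (by omega : m + 2 ≠ 0), if_neg (by omega : m + 1 ≠ 0)]
        exact env_concave hF1 m hm
  have := env_le 0 (Nat.zero_le d) hg
  simpa using this

lemma env_d (hF1 : ∀ k, k ≤ d → F k ≤ min (k : ℝ) 1) : env d F d = F d := by
  refine le_antisymm ?_ (le_env hF1 d le_rfl)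
  have hg : (fun k => if k = d then F d else env d F k) ∈ AdmSet d F := by
    constructor
    · intro k hk
      by_cases h : k = d
      · subst h; simp
      · simp only [if_neg h]; exact le_env hF1 k hk
    · intro m hm
      by_cases h : m + 2 = d
      · simp only [if_pos h, if_neg (by omega : m ≠ d), if_neg (by omega : m + 1 ≠ d)]
        have := env_concave hF1 m hm
        have hdd := le_env hF1 d le_rfl
        rw [h] at this
        linarith
      · simp only [if_neg h, if_neg (by omega : m ≠ d), if_neg (by omega : m + 1 ≠ d)]
        exact env_concave hF1 m hm
  have := env_le d le_rfl hg
  simpa using this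

lemma env_dichot (hF1 : ∀ k, k ≤ d → F k ≤ min (k : ℝ) 1) (j : ℕ) (hj : j + 2 ≤ d)
    (hlt : F (j + 1) < env d F (j + 1)) :
    2 * env d F (j + 1) ≤ env d F j + env d F (j + 2) := by
  by_contra hc
  push_neg at hc
  set c := max (F (j + 1)) ((env d F j + env d F (j + 2)) / 2) with hc_def
  have hcl : c < env d F (j + 1) := max_lt hlt (by linarith)
  have hg : (fun k => if k = j + 1 then c else env d F k) ∈ AdmSet d F := by
    constructor
    · intro k hk
      by_cases h : k = j + 1
      · subst h; simp only [eq_self_iff_true, if_true]; exact le_max_left _ _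
      · simp only [if_neg h]; exact le_env hF1 k hk
    · intro m hm
      by_cases h1 : m + 1 = j + 1
      · have hmj : m = j := by omega
        subst hmj
        simp only [eq_self_iff_true, if_true, if_neg (by omega : m ≠ m + 1), if_neg (by omega : m + 2 ≠ m + 1)]
        have := le_max_right (F (m + 1)) ((env d F m + env d F (m + 2)) / 2)
        linarith
      · by_cases h2 : m = j + 1
        · subst h2
          simp only [eq_self_iff_true, if_true, if_neg (by omega : j + 1 + 1 ≠ j + 1),
            if_neg (by omega : j + 1 + 2 ≠ j + 1)]
          have := env_concave hF1 (j + 1) hm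
          linarith
        · by_cases h3 : m + 2 = j + 1
          · simp only [h3, eq_self_iff_true, if_true, if_neg h1, if_neg h2]
            have := env_concave hF1 m hm
            rw [h3] at this
            linarith
          · simp only [if_neg h1, if_neg h2, if_neg h3]
            exact env_concave hF1 m hm
  have := env_le (j + 1) (by omega) hg
  simp only [eq_self_iff_true, if_true] at this
  linarith

lemma env_delta_anti (hF1 : ∀ k, k ≤ d → F k ≤ min (k : ℝ) 1) :
    ∀ n a, a + n + 1 ≤ d →
      env d F (a + n + 1) - env d F (a + n) ≤ env d F (a + 1) - env d F a := by
  intro n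
  induction n with
  | zero => intro a _; simp
  | succ n ih =>
    intro a ha
    have h1 := env_concave hF1 (a + n) (by omega)
    have h2 := ih a (by omega)
    have e1 : a + (n + 1) + 1 = a + n + 2 := by omega
    have e2 : a + (n + 1) = a + n + 1 := by omega
    rw [e1, e2]
    linarith

lemma env_delta_anti' (hF1 : ∀ k, k ≤ d → F k ≤ min (k : ℝ) 1) (a b : ℕ)
    (hab : a ≤ b) (hb : b + 1 ≤ d) :
    env d F (b + 1) - env d F b ≤ env d F (a + 1) - env d F a := by
  obtain ⟨n, rfl⟩ := Nat.exists_eq_add_of_le hab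
  exact env_delta_anti hF1 n a hb

lemma env_mono (hF1 : ∀ k, k ≤ d → F k ≤ min (k : ℝ) 1)
    (hFmono : ∀ a b, a ≤ b → b ≤ d → F a ≤ F b) :
    ∀ j, j + 1 ≤ d → env d F j ≤ env d F (j + 1) := by
  intro j
  induction j with
  | zero =>
    intro h0 
    by_contra hneg
    push_neg at hneg
    have htail : ∀ m, 1 ≤ m → m ≤ d → env d F m ≤ env d F 1 := by
      intro m
      induction m with
      | zero => omega
      | succ m ih =>
        intro _ hm
        by_cases hm1 : 1 ≤ m
        · have := ih hm1 (by omega)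
          have hd := env_delta_anti' hF1 0 m (by omega) hm
          linarith
        · have : m = 0 := by omega
          subst this; exact le_rfl
    have h1 := htail d h0 le_rfl
    have h2 := env_d hF1
    have h3 := env_zero hF1
    have h4 := hFmono 0 d (Nat.zero_le d) le_rfl
    linarith
  | succ j ih =>
    intro hj
    by_contra hneg
    push_neg at hneg
    have htail : ∀ m, j + 2 ≤ m → m ≤ d → env d F m ≤ env d F (j + 2) := by
      intro m
      induction m with
      | zero => omega
      | succ m ihm =>
        intro h1 hm
        by_cases hm1 : j + 2 ≤ m
        · have := ihm hm1 (by omega)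
          have hdl := env_delta_anti' hF1 (j + 1) m (by omega) hm
          have : env d F (j + 1 + 1) - env d F (j + 1) < 0 := by linarith
          linarith
        · have : m = j + 1 := by omega
          subst this; exact le_rfl
    have h1 := htail d hj le_rfl
    have h2 := env_d hF1
    have h4 := hFmono (j + 1) d (by omega) le_rfl
    have hflt : F (j + 1) < env d F (j + 1) := by
      have : env d F (j + 1 + 1) = env d F (j + 2) := by norm_num
      linarith
    have hdich := env_dichot hF1 j hj hflt
    have hstep : env d F (j + 1) < env d F j := by
      have : env d F (j + 1 + 1) = env d F (j + 2) := by norm_num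
      linarith
    have := ih (by omega)
    linarith

lemma contact_right (hF1 : ∀ k, k ≤ d → F k ≤ min (k : ℝ) 1) (k : ℕ) (hk : k + 1 ≤ d) :
    ∃ t', k < t' ∧ t' ≤ d ∧ env d F t' = F t' ∧
      env d F t' - env d F k = ((t' - k : ℕ) : ℝ) * (env d F (k + 1) - env d F k) := by
  set Δ := env d F (k + 1) - env d F k with hΔ
  have Q : ∀ m, k + 1 ≤ m → m ≤ d →
      (∃ t', k < t' ∧ t' ≤ m ∧ env d F t' = F t' ∧
        env d F t' - env d F k = ((t' - k : ℕ) : ℝ) * Δ) ∨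
      ((∀ j, k ≤ j → j ≤ m → env d F j - env d F k = ((j - k : ℕ) : ℝ) * Δ) ∧
        F m < env d F m) := by
    intro m hm
    induction m, hm using Nat.le_induction with
    | base =>
      intro _
      by_cases he : env d F (k + 1) = F (k + 1)
      · refine Or.inl ⟨k + 1, by omega, le_rfl, he, ?_⟩
        have e1 : k + 1 - k = 1 := by omega
        rw [e1]; push_cast; ring
      · refine Or.inr ⟨?_, lt_of_le_of_ne (le_env hF1 (k + 1) hk) (fun h => he h.symm)⟩
        intro j hj1 hj2
        rcases (by omega : j = k ∨ j = k + 1) with rfl | rfl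
        · simp
        · have e1 : k + 1 - k = 1 := by omega
          rw [e1]; push_cast; ring
    | succ m hm ih =>
      intro hmd
      rcases ih (by omega) with ⟨t', ht1, ht2, ht3, ht4⟩ | ⟨inv, hflt⟩
      · exact Or.inl ⟨t', ht1, by omega, ht3, ht4⟩
      · obtain ⟨j, rfl⟩ : ∃ j, m = j + 1 := ⟨m - 1, by omega⟩
        have hdich := env_dichot hF1 j (by omega) hflt
        have hconc := env_concave hF1 j (by omega)
        have h1 := inv j (by omega) (by omega)
        have h2 := inv (j + 1) (by omega) (by omega)
        have e1 : j + 1 - k = (j - k) + 1 := by omega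
        have e2 : j + 1 + 1 - k = (j - k) + 2 := by omega
        have hnew : env d F (j + 1 + 1) - env d F k = ((j + 1 + 1 - k : ℕ) : ℝ) * Δ := by
          rw [e2]; rw [e1] at h2; push_cast at h2 ⊢; linarith
        by_cases he : env d F (j + 1 + 1) = F (j + 1 + 1)
        · exact Or.inl ⟨j + 1 + 1, by omega, le_rfl, he, hnew⟩
        · refine Or.inr ⟨?_, lt_of_le_of_ne (le_env hF1 (j + 1 + 1) hmd)
            (fun h => he h.symm)⟩
          intro j' hj1 hj2
          rcases (by omega : j' ≤ j + 1 ∨ j' = j + 1 + 1) with h | rfl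
          · exact inv j' hj1 h
          · exact hnew
  rcases Q d hk le_rfl with ⟨t', ht1, ht2, ht3, ht4⟩ | ⟨_, hflt⟩
  · exact ⟨t', ht1, ht2, ht3, ht4⟩
  · exfalso
    have := env_d hF1
    linarith

lemma contact_left (hF1 : ∀ k, k ≤ d → F k ≤ min (k : ℝ) 1) (k : ℕ) (hk : k + 1 ≤ d) :
    ∃ t, t ≤ k ∧ env d F t = F t ∧
      env d F (k + 1) - env d F t = ((k + 1 - t : ℕ) : ℝ) * (env d F (k + 1) - env d F k) := by
  set Δ := env d F (k + 1) - env d F k with hΔ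
  have R : ∀ n, n ≤ k →
      (∃ t, k - n ≤ t ∧ t ≤ k ∧ env d F t = F t ∧
        env d F (k + 1) - env d F t = ((k + 1 - t : ℕ) : ℝ) * Δ) ∨
      ((∀ j, k - n ≤ j → j ≤ k + 1 →
          env d F (k + 1) - env d F j = ((k + 1 - j : ℕ) : ℝ) * Δ) ∧
        F (k - n) < env d F (k - n)) := by
    intro n
    induction n with
    | zero =>
      intro _
      by_cases he : env d F k = F k
      · refine Or.inl ⟨k, by omega, le_rfl, he, ?_⟩
        have e1 : k + 1 - k = 1 := by omega
        rw [e1]; push_cast; ring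
      · refine Or.inr ⟨?_, by
          simpa using lt_of_le_of_ne (le_env hF1 k (by omega)) (fun h => he h.symm)⟩
        intro j hj1 hj2
        rcases (by omega : j = k ∨ j = k + 1) with rfl | rfl
        · have e1 : j + 1 - j = 1 := by omega
          rw [e1]; push_cast; ring
        · simp
    | succ n ihn =>
      intro hn
      rcases ihn (by omega) with ⟨t, ht1, ht2, ht3, ht4⟩ | ⟨inv, hflt⟩
      · exact Or.inl ⟨t, by omega, ht2, ht3, ht4⟩
      · obtain ⟨j, hj⟩ : ∃ j, k - n = j + 1 := ⟨k - n - 1, by omega⟩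
        rw [hj] at hflt
        have hdich := env_dichot hF1 j (by omega) hflt
        have hconc := env_concave hF1 j (by omega)
        have h1 := inv (j + 1) (by omega) (by omega)
        have h2 := inv (j + 2) (by omega) (by omega)
        have e1 : k + 1 - (j + 1) = (k + 1 - (j + 2)) + 1 := by omega
        have e2 : k + 1 - j = (k + 1 - (j + 2)) + 2 := by omega
        have hnew : env d F (k + 1) - env d F j = ((k + 1 - j : ℕ) : ℝ) * Δ := by
          rw [e2]; rw [e1] at h1
          have h2' : env d F (k + 1) - env d F (j + 1 + 1) = ((k + 1 - (j + 2) : ℕ) : ℝ) * Δ := by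
            convert h2 using 3 <;> omega
          push_cast at h1 h2' ⊢
          have : env d F (j + 1 + 1) = env d F (j + 2) := by norm_num
          linarith
        by_cases he : env d F j = F j
        · exact Or.inl ⟨j, by omega, by omega, he, hnew⟩
        · refine Or.inr ⟨?_, ?_⟩
          · intro j' hj1 hj2
            rcases (by omega : j + 1 ≤ j' ∨ j' = j) with h | rfl
            · exact inv j' (by omega) hj2
            · exact hnew
          · have : k - (n + 1) = j := by omega
            rw [this]
            exact lt_of_le_of_ne (le_env hF1 j (by omega)) (fun h => he h.symm)
  rcases R k le_rfl with ⟨t, _, ht2, ht3, ht4⟩ | ⟨_, hflt⟩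
  · exact ⟨t, ht2, ht3, ht4⟩
  · exfalso
    have h0 := env_zero hF1
    simp only [Nat.sub_self] at hflt
    linarith

end envthy
theorem sup_of_subset_in_linf_ball (d : ℕ) (hd : 0 < d) (x : Fin d → ℝ)
    (hx : Simplex d x) (ε : ℝ) (hε : 0 < ε)
    (B : Set (Fin d → ℝ)) (hBne : B.Nonempty)
    (hB : ∀ b ∈ B, Simplex d b ∧ dInf d b x ≤ ε) :
    ∃ xsup : Fin d → ℝ, Simplex d xsup ∧
      (∀ b ∈ B, Maj d xsup b) ∧
      (∀ w : Fin d → ℝ, Simplex d w → (∀ b ∈ B, Maj d w b) → Maj d w xsup) ∧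
      dInf d xsup x ≤ ε := by
  classical
  set F : ℕ → ℝ := fun k => sSup ((fun b => psum d b k) '' B) with hF_def
  -- basic facts about members of B
  have hBsimp : ∀ b ∈ B, Simplex d b := fun b hb => (hB b hb).1
  have hBsum : ∀ b ∈ B, ∑ i, b i = 1 := fun b hb => (hBsimp b hb).2.2
  have hBnn : ∀ b ∈ B, ∀ i, 0 ≤ b i := fun b hb => (hBsimp b hb).2.1
  have hBent : ∀ b ∈ B, ∀ i, |b i - x i| ≤ ε := by
    intro b hb i
    have h1 : |b i - x i| ≤ dInf d b x := by
      apply le_ciSup (f := fun i => |b i - x i|)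
        (Set.Finite.bddAbove (Set.finite_range _)) i
    exact h1.trans (hB b hb).2
  have hbdd : ∀ k, BddAbove ((fun b => psum d b k) '' B) := by
    intro k
    refine ⟨1, ?_⟩
    rintro r ⟨b, hb, rfl⟩
    have := psum_le_total b (hBnn b hb) k
    rw [hBsum b hb] at this
    exact this
  have hFub : ∀ b ∈ B, ∀ k, psum d b k ≤ F k := fun b hb k =>
    le_csSup (hbdd k) (Set.mem_image_of_mem _ hb)
  have hFle : ∀ k (r : ℝ), (∀ b ∈ B, psum d b k ≤ r) → F k ≤ r := by
    intro k r hr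
    apply csSup_le (hBne.image _)
    rintro s ⟨b, hb, rfl⟩
    exact hr b hb
  have hF1 : ∀ k, k ≤ d → F k ≤ min (k : ℝ) 1 := by
    intro k _
    apply hFle
    intro b hb
    refine le_min (psum_le_nat b (simplex_entry_le_one b (hBsimp b hb)) k) ?_
    have := psum_le_total b (hBnn b hb) k
    rw [hBsum b hb] at this
    exact this
  have hFmono : ∀ a c, a ≤ c → c ≤ d → F a ≤ F c := by
    intro a c hac _
    apply hFle
    intro b hb
    exact (psum_mono_k b (hBnn b hb) hac).trans (hFub b hb c)
  have hF0 : F 0 = 0 := by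
    apply le_antisymm
    · apply hFle; intro b hb; rw [psum_zero]
    · obtain ⟨b, hb⟩ := hBne
      have := hFub b hb 0
      rw [psum_zero] at this
      exact this
  have hFd : F d = 1 := by
    apply le_antisymm
    · apply hFle; intro b hb
      rw [psum_of_le d b d le_rfl, hBsum b hb]
    · obtain ⟨b, hb⟩ := hBne
      have := hFub b hb d
      rw [psum_of_le d b d le_rfl, hBsum b hb] at this
      exact this
  set L : ℕ → ℝ := env d F with hL_def
  have hL0 : L 0 = 0 := by rw [hL_def, env_zero hF1, hF0]
  have hLd : L d = 1 := by rw [hL_def, env_d hF1, hFd]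
  have hLmono := env_mono hF1 hFmono
  have hLanti := env_delta_anti' hF1
  have hLgeF : ∀ k, k ≤ d → F k ≤ L k := le_env hF1
  -- the candidate supremum
  set xs : Fin d → ℝ := fun i => L ((i : ℕ) + 1) - L (i : ℕ) with hxs_def
  have hxs_val : ∀ (k : ℕ) (h : k < d), xs ⟨k, h⟩ = L (k + 1) - L k := fun k h => rfl
  have hpsum_xs : ∀ k, k ≤ d → psum d xs k = L k := by
    intro k
    induction k with
    | zero => intro _; rw [psum_zero, hL0]
    | succ k ih =>
      intro hk
      rw [psum_succ, dif_pos (by omega : k < d), ih (by omega), hxs_val k (by omega)]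
      ring
  have hxs_simplex : Simplex d xs := by
    refine ⟨?_, ?_, ?_⟩
    · intro i j hij
      have := hLanti (i : ℕ) (j : ℕ) hij j.isLt
      simpa [hxs_def] using this
    · intro i
      have := hLmono (i : ℕ) i.isLt
      simp only [hxs_def]
      linarith
    · have := hpsum_xs d le_rfl
      rw [psum_of_le d xs d le_rfl] at this
      rw [this, hLd]
  have hxs_maj : ∀ b ∈ B, Maj d xs b := by
    intro b hb k
    by_cases hk : k ≤ d
    · rw [hpsum_xs k hk]
      exact (hFub b hb k).trans (hLgeF k hk)
    · push_neg at hk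
      rw [psum_of_le d b k (by omega), psum_of_le d xs k (by omega), hBsum b hb,
        ← psum_of_le d xs d le_rfl, hpsum_xs d le_rfl, hLd]
  have hxs_min : ∀ w : Fin d → ℝ, Simplex d w → (∀ b ∈ B, Maj d w b) → Maj d w xs := by
    intro w hw hwB k
    have hgadm : (fun m => psum d w m) ∈ AdmSet d F := by
      constructor
      · intro m _
        apply hFle
        intro b hb
        exact hwB b hb m
      · intro m hm
        have e1 : psum d w (m + 1) = psum d w m + w ⟨m, by omega⟩ := by
          rw [psum_succ, dif_pos (by omega : m < d)]
        have e2 := psum_succ d w (m + 1)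
        rw [dif_pos (by omega : m + 1 < d)] at e2
        have e3 : psum d w (m + 1 + 1) = psum d w (m + 2) := by norm_num
        have hdec : w ⟨m + 1, by omega⟩ ≤ w ⟨m, by omega⟩ :=
          hw.1 _ _ (by simp [Fin.le_def])
        show psum d w m + psum d w (m + 2) ≤ 2 * psum d w (m + 1)
        linarith
    by_cases hk : k ≤ d
    · rw [hpsum_xs k hk]
      exact env_le k hk hgadm
    · push_neg at hk
      rw [psum_of_le d w k (by omega), psum_of_le d xs k (by omega), hw.2.2,
        ← psum_of_le d xs d le_rfl, hpsum_xs d le_rfl, hLd]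
  -- the distance bound
  have hdist : ∀ i : Fin d, |xs i - x i| ≤ ε := by
    intro i
    set k : ℕ := (i : ℕ) with hk_def
    have hkd : k < d := i.isLt
    have hik : i = ⟨k, hkd⟩ := by simp [hk_def]
    rw [abs_le]
    constructor
    · -- lower bound : x i - ε ≤ xs i
      obtain ⟨t, ht1, ht2, ht3⟩ := contact_left hF1 k hkd
      have hpos : (0 : ℝ) < ((k + 1 - t : ℕ) : ℝ) := by
        have : 1 ≤ k + 1 - t := by omega
        exact_mod_cast Nat.lt_of_lt_of_le Nat.zero_lt_one this
      have hFt : F t ≤ F (k + 1) - ((k + 1 - t : ℕ) : ℝ) * (x ⟨k, hkd⟩ - ε) := by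
        apply hFle
        intro b hb
        have hint := psum_interval_ge b (fun a c hac => (hBsimp b hb).1 a c hac) k hkd t ht1
          (k + 1) (by omega) le_rfl
        have hbk : x ⟨k, hkd⟩ - ε ≤ b ⟨k, hkd⟩ := by
          have := hBent b hb ⟨k, hkd⟩
          rw [abs_le] at this
          linarith [this.1]
        have hub := hFub b hb (k + 1)
        nlinarith [hpos.le]
      have hLk1 : F (k + 1) ≤ L (k + 1) := hLgeF (k + 1) hkd
      have key : ((k + 1 - t : ℕ) : ℝ) * (x ⟨k, hkd⟩ - ε) ≤
          ((k + 1 - t : ℕ) : ℝ) * (L (k + 1) - L k) := by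
        rw [← ht3, ht2]
        linarith
      have hq := (mul_le_mul_iff_right₀ hpos).mp key
      rw [hik]
      simp only [hxs_val]
      linarith
    · -- upper bound : xs i ≤ x i + ε
      obtain ⟨t', ht1, ht2, ht3, ht4⟩ := contact_right hF1 k hkd
      have hpos : (0 : ℝ) < ((t' - k : ℕ) : ℝ) := by
        have : 1 ≤ t' - k := by omega
        exact_mod_cast Nat.lt_of_lt_of_le Nat.zero_lt_one this
      have hFt : F t' ≤ F k + ((t' - k : ℕ) : ℝ) * (x ⟨k, hkd⟩ + ε) := by
        apply hFle
        intro b hb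
        have hint := psum_interval_le b (fun a c hac => (hBsimp b hb).1 a c hac) k hkd
          t' (by omega) ht2
        have hbk : b ⟨k, hkd⟩ ≤ x ⟨k, hkd⟩ + ε := by
          have := hBent b hb ⟨k, hkd⟩
          rw [abs_le] at this
          linarith [this.2]
        have hub := hFub b hb k
        nlinarith [hpos.le]
      have hLk : F k ≤ L k := hLgeF k (by omega)
      have key : ((t' - k : ℕ) : ℝ) * (L (k + 1) - L k) ≤
          ((t' - k : ℕ) : ℝ) * (x ⟨k, hkd⟩ + ε) := by
        rw [← ht4, ht3]
        linarith
      have hq := (mul_le_mul_iff_right₀ hpos).mp key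
      rw [hik]
      simp only [hxs_val]
      linarith
  refine ⟨xs, hxs_simplex, hxs_maj, hxs_min, ?_⟩
  have : Nonempty (Fin d) := ⟨⟨0, hd⟩⟩
  exact ciSup_le hdist
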